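/- Let G be a 2-free circular interval digraph on n ≥ 4 vertices maximizing the number of induced 3-vertex directed paths among all such digraphs on n vertices (and, among these, minimizing ξ(G), the number of pairs (edge uv, non-edge wx) with d(u,v) > d(w,x)). Then the maximum edge length β_G satisfies β_G < n/2. -/

import Mathlib

/-- A digraph (given by its edge relation) is 2-free: no loops and no 2-cycles. -/
def TwoFree {V : Type*} (E : V → V → Prop) : Prop :=
  (∀ v, ¬ E v v) ∧ ∀ u v, ¬ (E u v ∧ E v u)

/-- `(u, w, v)` is an induced directed 3-vertex path. -/
def InducedP3 {V : Type*} (E : V → V → Prop) (u w v : V) : Prop :=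
  u ≠ w ∧ w ≠ v ∧ u ≠ v ∧ E u w ∧ E w v ∧ ¬ E w u ∧ ¬ E v w ∧ ¬ E u v ∧ ¬ E v u

instance {V : Type*} [DecidableEq V] (E : V → V → Prop) [DecidableRel E] (u w v : V) :
    Decidable (InducedP3 E u w v) := by unfold InducedP3; infer_instance

/-- The clockwise circular distance (the "length" of the pair `(u,v)`) on `Fin n`. -/
def cdist (n : ℕ) (u v : Fin n) : ℕ := ((v : ℕ) + n - (u : ℕ)) % n

/-- `E` is a circular interval digraph with respect to the standard circular order of
`Fin n`: whenever `u, v, w` are distinct and in clockwise order (i.e. `v` lies strictly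
between `u` and `w` clockwise) and `u → w` is an edge, then `u → v` and `v → w` are edges. -/
def CircInterval (n : ℕ) (E : Fin n → Fin n → Prop) : Prop :=
  ∀ u v w : Fin n, u ≠ v → v ≠ w → u ≠ w →
    cdist n u v < cdist n u w → E u w → E u v ∧ E v w

/-- The number of induced 3-vertex directed paths. -/
def p3Count (n : ℕ) (E : Fin n → Fin n → Prop) [DecidableRel E] : ℕ :=
  ((Finset.univ : Finset (Fin n × Fin n × Fin n)).filter
    (fun p => InducedP3 E p.1 p.2.1 p.2.2)).card

/-- `ξ(G)`: the number of pairs (edge `uv`, non-edge `wx`) with `d(u,v) > d(w,x)`. -/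
def xiCount (n : ℕ) (E : Fin n → Fin n → Prop) [DecidableRel E] : ℕ :=
  ((Finset.univ : Finset (Fin n × Fin n × Fin n × Fin n)).filter
    (fun p => E p.1 p.2.1 ∧ p.2.2.1 ≠ p.2.2.2 ∧ ¬ E p.2.2.1 p.2.2.2 ∧
      ¬ E p.2.2.2 p.2.2.1 ∧ cdist n p.2.2.1 p.2.2.2 < cdist n p.1 p.2.1)).card

/-- `E` is optimal: it is a 2-free circular interval digraph on `n` vertices maximizing
the number of induced 3-vertex paths, and subject to that minimizing `ξ`. -/
def Optimal (n : ℕ) (E : Fin n → Fin n → Prop) [DecidableRel E] : Prop :=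
  TwoFree E ∧ CircInterval n E ∧
    ∀ (F : Fin n → Fin n → Prop) (instF : DecidableRel F), TwoFree F → CircInterval n F →
      @p3Count n F instF ≤ p3Count n E ∧
        (@p3Count n F instF = p3Count n E → xiCount n E ≤ @xiCount n F instF)

section Helpers

lemma cdist_eq' {n : ℕ} (hn : 0 < n) (u v : Fin n) :
    cdist n u v = if (u:ℕ) ≤ (v:ℕ) then (v:ℕ) - u else (v:ℕ) + n - u := by
  have hu := u.isLt; have hv := v.isLt
  unfold cdist
  split_ifs with h
  · have e : (v:ℕ) + n - u = ((v:ℕ) - u) + n := by omega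
    rw [e, Nat.add_mod_right, Nat.mod_eq_of_lt (by omega)]
  · rw [Nat.mod_eq_of_lt (by omega)]

lemma cdist_lt_n' {n : ℕ} (hn : 0 < n) (u v : Fin n) : cdist n u v < n := Nat.mod_lt _ hn

lemma cdist_eq_zero' {n : ℕ} (hn : 0 < n) {u v : Fin n} : cdist n u v = 0 ↔ u = v := by
  rw [cdist_eq' hn, Fin.ext_iff]
  have hu := u.isLt; have hv := v.isLt
  split_ifs <;> omega

lemma cdist_inj_right' {n : ℕ} (hn : 0 < n) {u v w : Fin n} (h : cdist n u v = cdist n u w) :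
    v = w := by
  rw [cdist_eq' hn, cdist_eq' hn] at h
  have hu := u.isLt; have hv := v.isLt; have hw := w.isLt
  apply Fin.val_injective; split_ifs at h <;> omega

lemma cdist_inj_left' {n : ℕ} (hn : 0 < n) {u v w : Fin n} (h : cdist n u w = cdist n v w) :
    u = v := by
  rw [cdist_eq' hn, cdist_eq' hn] at h
  have hu := u.isLt; have hv := v.isLt; have hw := w.isLt
  apply Fin.val_injective; split_ifs at h <;> omega

lemma cdist_add_cdist' {n : ℕ} (hn : 0 < n) {u v : Fin n} (h : u ≠ v) :
    cdist n u v + cdist n v u = n := by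
  have hne : (u:ℕ) ≠ v := fun hh => h (Fin.val_injective hh)
  rw [cdist_eq' hn, cdist_eq' hn]
  have hu := u.isLt; have hv := v.isLt
  split_ifs <;> omega

lemma cdist_add_of_lt' {n : ℕ} (hn : 0 < n) {u v w : Fin n} (huv : u ≠ v) (hvw : v ≠ w)
    (huw : u ≠ w) (h : cdist n u v < cdist n u w) :
    cdist n u w = cdist n u v + cdist n v w := by
  have h1 : (u:ℕ) ≠ v := fun hh => huv (Fin.val_injective hh)
  have h2 : (v:ℕ) ≠ w := fun hh => hvw (Fin.val_injective hh)
  have h3 : (u:ℕ) ≠ w := fun hh => huw (Fin.val_injective hh)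
  rw [cdist_eq' hn, cdist_eq' hn] at h
  rw [cdist_eq' hn, cdist_eq' hn, cdist_eq' hn]
  have hu := u.isLt; have hv := v.isLt; have hw := w.isLt
  split_ifs at h ⊢ <;> omega

lemma cdist_mk' {n : ℕ} (hn : 0 < n) (u : Fin n) (t : ℕ) (ht : t < n) :
    cdist n u ⟨((u:ℕ) + t) % n, Nat.mod_lt _ hn⟩ = t := by
  show (((u:ℕ) + t) % n + n - (u:ℕ)) % n = t
  have hu := u.isLt
  rcases Nat.lt_or_ge ((u:ℕ) + t) n with h | h
  · rw [Nat.mod_eq_of_lt h]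
    have e : (u:ℕ) + t + n - u = t + n := by omega
    simp only [e, Nat.add_mod_right, Nat.mod_eq_of_lt ht]
  · have h1 : ((u:ℕ) + t) % n = (u:ℕ) + t - n := by
      rw [Nat.mod_eq_sub_mod h]; exact Nat.mod_eq_of_lt (by omega)
    rw [h1]
    have e : (u:ℕ) + t - n + n - u = t := by omega
    rw [e, Nat.mod_eq_of_lt ht]

end Helpers

theorem optimal_beta_lt_half (n : ℕ) (hn : 4 ≤ n)
    (E : Fin n → Fin n → Prop) [DecidableRel E] (hopt : Optimal n E) :
    ∀ u v : Fin n, E u v → 2 * cdist n u v < n := by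
  by_contra hcon
  push_neg at hcon
  obtain ⟨u0, v0, he0, hlen0⟩ := hcon
  obtain ⟨htf, hci, hmax⟩ := hopt
  have hn0 : 0 < n := by omega
  obtain ⟨q, hqs, hqmax⟩ :=
    (Finset.univ.filter (fun p : Fin n × Fin n => E p.1 p.2)).exists_max_image
      (fun p => cdist n p.1 p.2)
      ⟨(u0, v0), Finset.mem_filter.mpr ⟨Finset.mem_univ _, he0⟩⟩
  obtain ⟨u, w⟩ := q
  have heuw : E u w := (Finset.mem_filter.mp hqs).2
  set β := cdist n u w with hβ
  have hβmax : ∀ a b : Fin n, E a b → cdist n a b ≤ β := fun a b hab =>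
    hqmax (a, b) (Finset.mem_filter.mpr ⟨Finset.mem_univ _, hab⟩)
  have h2β : n ≤ 2 * β := le_trans hlen0 (by have := hβmax u0 v0 he0; omega)
  have huw : u ≠ w := by rintro rfl; exact htf.1 u heuw
  have hβn : β < n := cdist_lt_n' hn0 u w
  have hβ2 : 2 ≤ β := by
    have hb0 : β ≠ 0 := fun h => huw ((cdist_eq_zero' hn0).mp h)
    omega
  -- short chords from u are edges
  have hshort : ∀ x : Fin n, x ≠ u → x ≠ w → cdist n u x < β → E u x ∧ E x w :=
    fun x hxu hxw hlt => hci u x w (Ne.symm hxu) hxw huw hlt heuw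
  have hlong : ∀ x : Fin n, x ≠ u → x ≠ w → ¬ E u x → β < cdist n u x := by
    intro x hxu hxw hne
    rcases lt_trichotomy (cdist n u x) β with h | h | h
    · exact absurd (hshort x hxu hxw h).1 hne
    · exact absurd (cdist_inj_right' hn0 (h.trans hβ)) hxw
    · exact h
  -- the modified digraph F : delete the single longest edge (u, w)
  set F : Fin n → Fin n → Prop := fun a b => E a b ∧ ¬(a = u ∧ b = w) with hFdef
  haveI instF : DecidableRel F := fun a b =>
    decidable_of_iff (E a b ∧ ¬(a = u ∧ b = w)) (by simp only [hFdef])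
  have htfF : TwoFree F :=
    ⟨fun v hv => htf.1 v hv.1, fun a b hab => htf.2 a b ⟨hab.1.1, hab.2.1⟩⟩
  have hciF : CircInterval n F := by
    intro a b c hab hbc hac hlt hacF
    obtain ⟨h1, h2⟩ := hci a b c hab hbc hac hlt hacF.1
    refine ⟨⟨h1, ?_⟩, ⟨h2, ?_⟩⟩
    · intro hh
      have h3 := hβmax a c hacF.1
      rw [hh.1, hh.2, ← hβ] at hlt
      rw [hh.1] at h3
      omega
    · intro hh
      have hadd := cdist_add_of_lt' hn0 hab hbc hac hlt
      rw [hh.1, hh.2, ← hβ] at hadd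
      have h3 := hβmax a c hacF.1
      rw [hh.2] at h3
      have hau : a ≠ u := by rw [← hh.1]; exact hab
      have h4 : cdist n a u ≠ 0 := fun h0 => hau ((cdist_eq_zero' hn0).mp h0)
      omega
  -- the P3 sets
  set PE := (Finset.univ : Finset (Fin n × Fin n × Fin n)).filter
      (fun p => InducedP3 E p.1 p.2.1 p.2.2) with hPE
  set PF := (Finset.univ : Finset (Fin n × Fin n × Fin n)).filter
      (fun p => InducedP3 F p.1 p.2.1 p.2.2) with hPF
  have hPEcard : p3Count n E = PE.card := rfl
  have hPFcard : @p3Count n F instF = PF.card := rfl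
  -- characterization of destroyed paths
  have hDchar : ∀ p : Fin n × Fin n × Fin n, p ∈ PE \ PF →
      (p.1 = u ∧ p.2.1 = w) ∨ (p.2.1 = u ∧ p.2.2 = w) := by
    intro p hp
    rw [Finset.mem_sdiff] at hp
    obtain ⟨hpE, hpF⟩ := hp
    rw [hPE, Finset.mem_filter] at hpE
    obtain ⟨-, h1, h2, h3, h4, h5, h6, h7, h8, h9⟩ := hpE
    by_contra hcc
    push_neg at hcc
    apply hpF
    rw [hPF, Finset.mem_filter]
    exact ⟨Finset.mem_univ _, h1, h2, h3,
      ⟨h4, fun hh => hcc.1 hh.1 hh.2⟩, ⟨h5, fun hh => hcc.2 hh.1 hh.2⟩,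
      fun hh => h6 hh.1, fun hh => h7 hh.1, fun hh => h8 hh.1, fun hh => h9 hh.1⟩
  -- destroyed paths inject into lengths in (β, n)
  have hDle : (PE \ PF).card ≤ n - 1 - β := by
    have hinj : (PE \ PF).card ≤ (Finset.Ico (β + 1) n).card := by
      apply Finset.card_le_card_of_injOn
        (fun p => if p.1 = u ∧ p.2.1 = w then cdist n u p.2.2 else cdist n u p.1)
      · intro p hp
        have hch := hDchar p hp
        have hpE := (Finset.mem_sdiff.mp hp).1
        rw [hPE, Finset.mem_filter] at hpE
        obtain ⟨-, h1, h2, h3, h4, h5, h6, h7, h8, h9⟩ := hpE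
        rcases hch with ⟨ha, hb⟩ | ⟨hb, hc⟩
        · dsimp only; rw [Finset.mem_coe, if_pos ⟨ha, hb⟩, Finset.mem_Ico]
          rw [ha] at h3 h8
          rw [hb] at h2
          have := hlong p.2.2 (Ne.symm h3) (Ne.symm h2) h8
          exact ⟨by omega, cdist_lt_n' hn0 _ _⟩
        · dsimp only; rw [Finset.mem_coe, if_neg (fun hh => huw (hb.symm.trans hh.2)), Finset.mem_Ico]
          rw [hb] at h1 h6
          rw [hc] at h3
          have := hlong p.1 h1 h3 h6
          exact ⟨by omega, cdist_lt_n' hn0 _ _⟩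
      · intro p hp q hq heq
        rw [Finset.mem_coe] at hp hq
        dsimp only at heq
        have hchp := hDchar p hp
        have hchq := hDchar q hq
        have hpE := (Finset.mem_sdiff.mp hp).1
        have hqE := (Finset.mem_sdiff.mp hq).1
        rw [hPE, Finset.mem_filter] at hpE hqE
        obtain ⟨-, p1, p2, p3, p4, p5, p6, p7, p8, p9⟩ := hpE
        obtain ⟨-, q1, q2, q3, q4, q5, q6, q7, q8, q9⟩ := hqE
        by_cases hp1 : p.1 = u ∧ p.2.1 = w <;> by_cases hq1 : q.1 = u ∧ q.2.1 = w
        · rw [if_pos hp1, if_pos hq1] at heq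
          have e3 := cdist_inj_right' hn0 heq
          exact Prod.ext (hp1.1.trans hq1.1.symm)
            (Prod.ext (hp1.2.trans hq1.2.symm) e3)
        · -- p is type (u,w,x), q is type (y,u,w)
          rw [if_pos hp1, if_neg hq1] at heq
          have hq2 : q.2.1 = u ∧ q.2.2 = w := by
            rcases hchq with h | h
            · exact absurd h hq1
            · exact h
          have e3 := cdist_inj_right' hn0 heq
          rw [hp1.1] at p9
          rw [e3] at p9
          rw [hq2.1] at q4
          exact absurd q4 p9
        · rw [if_neg hp1, if_pos hq1] at heq
          have hp2 : p.2.1 = u ∧ p.2.2 = w := by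
            rcases hchp with h | h
            · exact absurd h hp1
            · exact h
          have e3 := cdist_inj_right' hn0 heq
          rw [hq1.1] at q9
          rw [← e3] at q9
          rw [hp2.1] at p4
          exact absurd p4 q9
        · rw [if_neg hp1, if_neg hq1] at heq
          have hp2 : p.2.1 = u ∧ p.2.2 = w := by
            rcases hchp with h | h
            · exact absurd h hp1
            · exact h
          have hq2 : q.2.1 = u ∧ q.2.2 = w := by
            rcases hchq with h | h
            · exact absurd h hq1
            · exact h
          have e1 := cdist_inj_right' hn0 heq
          exact Prod.ext e1 (Prod.ext (hp2.1.trans hq2.1.symm) (hp2.2.trans hq2.2.symm))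
    rw [Nat.card_Ico] at hinj
    omega
  -- created paths (u, x, w) for each x strictly between u and w
  have hCge : β - 1 ≤ (PF \ PE).card := by
    have hinj : (Finset.Ico 1 β).card ≤ (PF \ PE).card := by
      apply Finset.card_le_card_of_injOn
        (fun t => ((u, ⟨((u:ℕ) + t) % n, Nat.mod_lt _ hn0⟩, w) : Fin n × Fin n × Fin n))
      · intro t ht
        rw [Finset.mem_coe, Finset.mem_Ico] at ht
        have hcx : cdist n u ⟨((u:ℕ) + t) % n, Nat.mod_lt _ hn0⟩ = t :=
          cdist_mk' hn0 u t (by omega)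
        set x : Fin n := ⟨((u:ℕ) + t) % n, Nat.mod_lt _ hn0⟩ with hxdef
        have hxu : x ≠ u := by
          intro h
          rw [h] at hcx
          rw [(cdist_eq_zero' hn0).mpr rfl] at hcx
          omega
        have hxw : x ≠ w := by
          intro h
          rw [h, ← hβ] at hcx
          omega
        obtain ⟨hux, hxw2⟩ := hshort x hxu hxw (by omega)
        rw [Finset.mem_coe, Finset.mem_sdiff, hPF, hPE, Finset.mem_filter, Finset.mem_filter]
        constructor
        · exact ⟨Finset.mem_univ _, Ne.symm hxu, hxw, huw,
            ⟨hux, fun hh => hxw hh.2⟩, ⟨hxw2, fun hh => hxu hh.1⟩,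
            fun hh => htf.2 u x ⟨hux, hh.1⟩, fun hh => htf.2 x w ⟨hxw2, hh.1⟩,
            fun hh => hh.2 ⟨rfl, rfl⟩, fun hh => htf.2 u w ⟨heuw, hh.1⟩⟩
        · intro hh
          exact hh.2.2.2.2.2.2.2.2.1 heuw
      · intro t1 h1 t2 h2 heq
        rw [Finset.mem_coe, Finset.mem_Ico] at h1 h2
        dsimp only at heq
        have hv : ((⟨((u:ℕ) + t1) % n, Nat.mod_lt _ hn0⟩ : Fin n) =
            ⟨((u:ℕ) + t2) % n, Nat.mod_lt _ hn0⟩) := congrArg (fun r : Fin n × Fin n × Fin n => r.2.1) heq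
        have e1 := cdist_mk' hn0 u t1 (by omega)
        have e2 := cdist_mk' hn0 u t2 (by omega)
        rw [hv] at e1
        omega
    rw [Nat.card_Ico] at hinj
    omega
  -- counting identity
  have hid : PF.card + (PE \ PF).card = PE.card + (PF \ PE).card := by
    have h1 := Finset.card_inter_add_card_sdiff PE PF
    have h2 := Finset.card_inter_add_card_sdiff PF PE
    rw [Finset.inter_comm] at h2
    omega
  obtain ⟨hle, himp⟩ := hmax F instF htfF hciF
  rw [hPFcard, hPEcard] at hle
  have h2βn : 2 * β = n := by omega
  have hDeq : (PE \ PF).card = β - 1 := by omega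
  have hPeq : @p3Count n F instF = p3Count n E := by
    rw [hPFcard, hPEcard]; omega
  have hξ := himp hPeq
  -- the ξ sets
  set XE := (Finset.univ : Finset (Fin n × Fin n × Fin n × Fin n)).filter
      (fun r => E r.1 r.2.1 ∧ r.2.2.1 ≠ r.2.2.2 ∧ ¬ E r.2.2.1 r.2.2.2 ∧
        ¬ E r.2.2.2 r.2.2.1 ∧ cdist n r.2.2.1 r.2.2.2 < cdist n r.1 r.2.1) with hXE
  set XF := (Finset.univ : Finset (Fin n × Fin n × Fin n × Fin n)).filter
      (fun r => F r.1 r.2.1 ∧ r.2.2.1 ≠ r.2.2.2 ∧ ¬ F r.2.2.1 r.2.2.2 ∧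
        ¬ F r.2.2.2 r.2.2.1 ∧ cdist n r.2.2.1 r.2.2.2 < cdist n r.1 r.2.1) with hXF
  have hXEcard : xiCount n E = XE.card := rfl
  have hXFcard : @xiCount n F instF = XF.card := rfl
  have hwu : cdist n w u = β := by
    have := cdist_add_cdist' hn0 huw
    rw [← hβ] at this
    omega
  -- there is a non-edge of length < β
  have hne : ∃ x y : Fin n, x ≠ y ∧ ¬ E x y ∧ ¬ E y x ∧ cdist n x y < β := by
    by_contra hno
    push_neg at hno
    have hDne : (PE \ PF).Nonempty := Finset.card_pos.mp (by omega)
    obtain ⟨p, hp⟩ := hDne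
    have hch := hDchar p hp
    have hpE := (Finset.mem_sdiff.mp hp).1
    rw [hPE, Finset.mem_filter] at hpE
    obtain ⟨-, h1, h2, h3, h4, h5, h6, h7, h8, h9⟩ := hpE
    rcases hch with ⟨ha, hb⟩ | ⟨hb, hc⟩
    · -- p = (u, w, x); {u, x} is a non-edge
      rw [ha] at h3 h8 h9
      have hx1 := hno u p.2.2 h3 h8 h9
      have hx2 := hno p.2.2 u (Ne.symm h3) h9 h8
      have hs := cdist_add_cdist' hn0 h3
      have hux : cdist n u p.2.2 = β := by omega
      have hxw : p.2.2 = w := cdist_inj_right' hn0 (hux.trans hβ)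
      rw [hb] at h2
      exact h2 hxw.symm
    · -- p = (y, u, w); {y, w} is a non-edge
      rw [hc] at h3 h8 h9
      have hy1 := hno p.1 w h3 h8 h9
      have hy2 := hno w p.1 (Ne.symm h3) h9 h8
      have hs := cdist_add_cdist' hn0 h3
      have hyw : cdist n p.1 w = β := by omega
      have hyu : p.1 = u := cdist_inj_left' hn0 (hyw.trans hβ)
      rw [hb] at h1
      exact h1 hyu
  obtain ⟨x0, y0, hxy0, hnxy0, hnyx0, hlt0⟩ := hne
  have hsub : XF ⊆ XE := by
    intro r hr
    rw [hXF, Finset.mem_filter] at hr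
    obtain ⟨hru, hF1, hr2, hF3, hF4, hr5⟩ := hr
    have hEab : E r.1 r.2.1 := hF1.1
    have hble := hβmax _ _ hEab
    rw [hXE, Finset.mem_filter]
    refine ⟨hru, hEab, hr2, ?_, ?_, hr5⟩
    · intro hExy
      have hcase : r.2.2.1 = u ∧ r.2.2.2 = w := by
        by_contra hc; exact hF3 ⟨hExy, hc⟩
      rw [hcase.1, hcase.2, ← hβ] at hr5
      omega
    · intro hEyx
      have hcase : r.2.2.2 = u ∧ r.2.2.1 = w := by
        by_contra hc; exact hF4 ⟨hEyx, hc⟩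
      rw [hcase.2, hcase.1, hwu] at hr5
      omega
  have hssub : XF ⊂ XE := by
    refine ⟨hsub, fun hsub' => ?_⟩
    have hmemE : ((u, w, x0, y0) : Fin n × Fin n × Fin n × Fin n) ∈ XE := by
      rw [hXE, Finset.mem_filter]
      refine ⟨Finset.mem_univ _, heuw, hxy0, hnxy0, hnyx0, ?_⟩
      rw [← hβ]
      exact hlt0
    have hmemF := hsub' hmemE
    rw [hXF, Finset.mem_filter] at hmemF
    exact hmemF.2.1.2 ⟨rfl, rfl⟩
  have hltcard := Finset.card_lt_card hssub
  rw [hXEcard, hXFcard] at hξ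
  omega
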